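/- Let A, D be Hermitian n×n matrices with spectra in an open interval I, let f : I → ℝ be a monotone convex function, and let α ∈ (0,1). Then λ_i(f(αA + (1−α)D)) ≤ λ_i(α f(A) + (1−α) f(D)) for every i = 1, …, n. -/

import Mathlib

open scoped ComplexOrder Matrix

namespace AujlaAux

variable {n : ℕ}

local notation "E" => EuclideanSpace ℂ (Fin n)

/-- real quadratic form of a matrix -/
noncomputable def q (B : Matrix (Fin n) (Fin n) ℂ) (x : EuclideanSpace ℂ (Fin n)) : ℝ :=
  RCLike.re (inner (𝕜 := ℂ) x (Matrix.toEuclideanLin B x))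

lemma apply_eigvec {B : Matrix (Fin n) (Fin n) ℂ} (hB : B.IsHermitian) (j : Fin n) :
    Matrix.toEuclideanLin B (hB.eigenvectorBasis j) =
      hB.eigenvalues j • hB.eigenvectorBasis j := by
  have h := hB.mulVec_eigenvectorBasis j
  apply PiLp.ext
  intro k
  have := congrFun h k
  simpa [Matrix.toEuclideanLin_apply] using this

lemma cfc_apply_eigvec {B : Matrix (Fin n) (Fin n) ℂ} (hB : B.IsHermitian) (f : ℝ → ℝ)
    (j : Fin n) :
    Matrix.toEuclideanLin (cfc f B) (hB.eigenvectorBasis j) =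
      f (hB.eigenvalues j) • hB.eigenvectorBasis j := by
  rw [hB.cfc_eq]
  have h : (hB.cfc f) *ᵥ ⇑(hB.eigenvectorBasis j) =
      ((f (hB.eigenvalues j) : ℂ)) • ⇑(hB.eigenvectorBasis j) := by
    rw [Matrix.IsHermitian.cfc, Unitary.conjStarAlgAut_apply, ← Matrix.mulVec_mulVec, ← Matrix.mulVec_mulVec,
      hB.star_eigenvectorUnitary_mulVec, Matrix.diagonal_mulVec_single]
    have : (Pi.single j ((RCLike.ofReal ∘ f ∘ hB.eigenvalues) j * 1) : Fin n → ℂ)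
        = ((f (hB.eigenvalues j) : ℂ)) • (Pi.single j 1 : Fin n → ℂ) := by
      ext k
      by_cases hk : k = j
      · subst hk; simp
      · simp [Pi.single_eq_of_ne hk]
    rw [this, Matrix.mulVec_smul, hB.eigenvectorUnitary_mulVec]
  apply PiLp.ext
  intro k
  have := congrFun h k
  simpa [Matrix.toEuclideanLin_apply, Complex.real_smul] using this


lemma conj_mul_self (z : ℂ) : (starRingEnd ℂ) z * z = ((‖z‖ ^ 2 : ℝ) : ℂ) := by
  simp [Complex.mul_conj', mul_comm, Complex.conj_mul']

lemma inner_toEuclideanLin_symm {B : Matrix (Fin n) (Fin n) ℂ} (hB : B.IsHermitian)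
    (x y : EuclideanSpace ℂ (Fin n)) :
    (inner (𝕜 := ℂ) (Matrix.toEuclideanLin B x) y) = inner (𝕜 := ℂ) x (Matrix.toEuclideanLin B y) :=
  (Matrix.isHermitian_iff_isSymmetric.1 hB) x y

/-- expansion of the quadratic form in an orthonormal eigenbasis -/
lemma q_eq_sum {B : Matrix (Fin n) (Fin n) ℂ} (hB : B.IsHermitian)
    (b : OrthonormalBasis (Fin n) ℂ (EuclideanSpace ℂ (Fin n))) (ν : Fin n → ℝ)
    (hb : ∀ j, Matrix.toEuclideanLin B (b j) = ν j • b j) (x : EuclideanSpace ℂ (Fin n)) :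
    q B x = ∑ j, ν j * ‖(inner (𝕜 := ℂ) (b j) x : ℂ)‖ ^ 2 := by
  have h1 : (inner (𝕜 := ℂ) x (Matrix.toEuclideanLin B x) : ℂ)
      = ∑ j, inner (𝕜 := ℂ) x (b j) * inner (𝕜 := ℂ) (b j) (Matrix.toEuclideanLin B x) :=
    (b.sum_inner_mul_inner x _).symm
  have h2 : ∀ j, (inner (𝕜 := ℂ) (b j) (Matrix.toEuclideanLin B x) : ℂ)
      = (ν j : ℂ) * inner (𝕜 := ℂ) (b j) x := by
    intro j
    rw [← inner_toEuclideanLin_symm hB, hb j, RCLike.real_smul_eq_coe_smul (K := ℂ),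
      inner_smul_left]
    simp
  have h3 : ∀ j, (inner (𝕜 := ℂ) x (b j) : ℂ) * ((ν j : ℂ) * inner (𝕜 := ℂ) (b j) x)
      = ((ν j * ‖(inner (𝕜 := ℂ) (b j) x : ℂ)‖ ^ 2 : ℝ) : ℂ) := by
    intro j
    rw [← inner_conj_symm x (b j),
      show (starRingEnd ℂ) (inner (𝕜 := ℂ) (b j) x) * ((ν j : ℂ) * inner (𝕜 := ℂ) (b j) x)
        = (ν j : ℂ) * ((starRingEnd ℂ) (inner (𝕜 := ℂ) (b j) x) * inner (𝕜 := ℂ) (b j) x) by ring,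
      conj_mul_self, ← Complex.ofReal_mul]
  rw [q, h1]
  simp only [h2, h3]
  rw [← Complex.ofReal_sum]
  simp only [RCLike.re_to_complex, Complex.ofReal_re]

lemma norm_sq_eq_sum (b : OrthonormalBasis (Fin n) ℂ (EuclideanSpace ℂ (Fin n)))
    (x : EuclideanSpace ℂ (Fin n)) :
    ‖x‖ ^ 2 = ∑ j, ‖(inner (𝕜 := ℂ) (b j) x : ℂ)‖ ^ 2 := by
  have h1 : (inner (𝕜 := ℂ) x x : ℂ) = ∑ j, inner (𝕜 := ℂ) x (b j) * inner (𝕜 := ℂ) (b j) x :=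
    (b.sum_inner_mul_inner x x).symm
  have h3 : ∀ j, (inner (𝕜 := ℂ) x (b j) : ℂ) * inner (𝕜 := ℂ) (b j) x
      = ((‖(inner (𝕜 := ℂ) (b j) x : ℂ)‖ ^ 2 : ℝ) : ℂ) := by
    intro j
    rw [← inner_conj_symm x (b j), conj_mul_self]
  have : (‖x‖ ^ 2 : ℝ) = RCLike.re (inner (𝕜 := ℂ) x x : ℂ) := by
    rw [← inner_self_eq_norm_sq (𝕜 := ℂ)]
  rw [this, h1]
  simp only [h3]
  rw [← Complex.ofReal_sum]
  simp only [RCLike.re_to_complex, Complex.ofReal_re]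


lemma inner_eq_zero_of_mem_span (b : OrthonormalBasis (Fin n) ℂ (EuclideanSpace ℂ (Fin n)))
    {S : Finset (Fin n)} {j : Fin n} (hj : j ∉ S) {x : EuclideanSpace ℂ (Fin n)}
    (hx : x ∈ Submodule.span ℂ (b '' (S : Set (Fin n)))) :
    (inner (𝕜 := ℂ) (b j) x : ℂ) = 0 := by
  have hle : Submodule.span ℂ (b '' (S : Set (Fin n))) ≤ LinearMap.ker (innerSL ℂ (b j)).toLinearMap := by
    rw [Submodule.span_le]
    rintro - ⟨k, hk, rfl⟩
    have hjk : j ≠ k := fun h => hj (h ▸ hk)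
    simpa [LinearMap.mem_ker] using b.orthonormal.2 hjk
  exact hle hx

lemma finrank_span_image (b : OrthonormalBasis (Fin n) ℂ (EuclideanSpace ℂ (Fin n)))
    (S : Finset (Fin n)) :
    Module.finrank ℂ (Submodule.span ℂ (b '' (S : Set (Fin n)))) = S.card := by
  have li : LinearIndependent ℂ (fun k : (S : Set (Fin n)) => b k) :=
    b.orthonormal.linearIndependent.comp _ Subtype.val_injective
  have h := finrank_span_eq_card li
  rw [← Set.image_eq_range] at h
  rw [h]
  simp

lemma exists_ne_zero_mem_inf (M N : Submodule ℂ (EuclideanSpace ℂ (Fin n)))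
    (h : n < Module.finrank ℂ M + Module.finrank ℂ N) :
    ∃ x : EuclideanSpace ℂ (Fin n), x ≠ 0 ∧ x ∈ M ∧ x ∈ N := by
  have h1 := Submodule.finrank_sup_add_finrank_inf_eq M N
  have h2 : Module.finrank ℂ ↥(M ⊔ N) ≤ n := by
    simpa using Submodule.finrank_le (M ⊔ N)
  have h3 : 0 < Module.finrank ℂ ↥(M ⊓ N) := by omega
  have h4 : Nontrivial ↥(M ⊓ N) := Module.nontrivial_of_finrank_pos h3
  obtain ⟨y, hy⟩ := exists_ne (0 : ↥(M ⊓ N))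
  exact ⟨y.1, by simpa [Submodule.coe_eq_zero] using hy,
    y.2.1, y.2.2⟩


lemma le_q_of_mem_span {B : Matrix (Fin n) (Fin n) ℂ} (hB : B.IsHermitian)
    (b : OrthonormalBasis (Fin n) ℂ (EuclideanSpace ℂ (Fin n))) (ν : Fin n → ℝ)
    (hb : ∀ j, Matrix.toEuclideanLin B (b j) = ν j • b j)
    (S : Finset (Fin n)) (t : ℝ) (ht : ∀ j ∈ S, t ≤ ν j)
    {x : EuclideanSpace ℂ (Fin n)} (hx : x ∈ Submodule.span ℂ (b '' (S : Set (Fin n)))) :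
    t * ‖x‖ ^ 2 ≤ q B x := by
  have hw0 : ∀ j, (0:ℝ) ≤ ‖(inner (𝕜 := ℂ) (b j) x : ℂ)‖ ^ 2 := fun j => by positivity
  have hvanish : ∀ j, j ∉ S → ‖(inner (𝕜 := ℂ) (b j) x : ℂ)‖ ^ 2 = 0 := by
    intro j hj
    rw [inner_eq_zero_of_mem_span b hj hx]
    simp
  have h1 : q B x = ∑ j ∈ S, ν j * ‖(inner (𝕜 := ℂ) (b j) x : ℂ)‖ ^ 2 := by
    rw [q_eq_sum hB b ν hb]
    exact (Finset.sum_subset (Finset.subset_univ S)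
      (fun j _ hj => by rw [hvanish j hj, mul_zero])).symm
  have h2 : ‖x‖ ^ 2 = ∑ j ∈ S, ‖(inner (𝕜 := ℂ) (b j) x : ℂ)‖ ^ 2 := by
    rw [norm_sq_eq_sum b x]
    exact (Finset.sum_subset (Finset.subset_univ S)
      (fun j _ hj => hvanish j hj)).symm
  rw [h1, h2, Finset.mul_sum]
  exact Finset.sum_le_sum fun j hj => mul_le_mul_of_nonneg_right (ht j hj) (hw0 j)

lemma q_le_of_mem_span {B : Matrix (Fin n) (Fin n) ℂ} (hB : B.IsHermitian)
    (b : OrthonormalBasis (Fin n) ℂ (EuclideanSpace ℂ (Fin n))) (ν : Fin n → ℝ)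
    (hb : ∀ j, Matrix.toEuclideanLin B (b j) = ν j • b j)
    (S : Finset (Fin n)) (s : ℝ) (hs : ∀ j ∈ S, ν j ≤ s)
    {x : EuclideanSpace ℂ (Fin n)} (hx : x ∈ Submodule.span ℂ (b '' (S : Set (Fin n)))) :
    q B x ≤ s * ‖x‖ ^ 2 := by
  have hw0 : ∀ j, (0:ℝ) ≤ ‖(inner (𝕜 := ℂ) (b j) x : ℂ)‖ ^ 2 := fun j => by positivity
  have hvanish : ∀ j, j ∉ S → ‖(inner (𝕜 := ℂ) (b j) x : ℂ)‖ ^ 2 = 0 := by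
    intro j hj
    rw [inner_eq_zero_of_mem_span b hj hx]
    simp
  have h1 : q B x = ∑ j ∈ S, ν j * ‖(inner (𝕜 := ℂ) (b j) x : ℂ)‖ ^ 2 := by
    rw [q_eq_sum hB b ν hb]
    exact (Finset.sum_subset (Finset.subset_univ S)
      (fun j _ hj => by rw [hvanish j hj, mul_zero])).symm
  have h2 : ‖x‖ ^ 2 = ∑ j ∈ S, ‖(inner (𝕜 := ℂ) (b j) x : ℂ)‖ ^ 2 := by
    rw [norm_sq_eq_sum b x]
    exact (Finset.sum_subset (Finset.subset_univ S)
      (fun j _ hj => hvanish j hj)).symm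
  rw [h1, h2, Finset.mul_sum]
  exact Finset.sum_le_sum fun j hj => mul_le_mul_of_nonneg_right (hs j hj) (hw0 j)

lemma q_add (M N : Matrix (Fin n) (Fin n) ℂ) (x : EuclideanSpace ℂ (Fin n)) :
    q (M + N) x = q M x + q N x := by
  simp [q, inner_add_right]

lemma q_real_smul (r : ℝ) (M : Matrix (Fin n) (Fin n) ℂ) (x : EuclideanSpace ℂ (Fin n)) :
    q (r • M) x = r * q M x := by
  have h : (r • M) = (r : ℂ) • M := by
    ext i j
    simp [Complex.real_smul]
  rw [h]
  simp only [q, map_smul, LinearMap.smul_apply, inner_smul_right]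
  simp [Complex.mul_re]


lemma q_eigvec {B : Matrix (Fin n) (Fin n) ℂ} (hB : B.IsHermitian) (j : Fin n) :
    q B (hB.eigenvectorBasis j) = hB.eigenvalues j := by
  rw [q_eq_sum hB hB.eigenvectorBasis hB.eigenvalues (apply_eigvec hB)]
  rw [Finset.sum_eq_single j]
  · have h := hB.eigenvectorBasis.orthonormal.1 j
    rw [inner_self_eq_norm_sq_to_K]
    simp [h]
  · intro k _ hk
    rw [hB.eigenvectorBasis.orthonormal.2 hk]
    simp
  · intro h
    exact absurd (Finset.mem_univ j) h

/-- for a unit vector, the quadratic form is a convex combination of eigenvalues -/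
lemma q_mem_and_jensen {B : Matrix (Fin n) (Fin n) ℂ} (hB : B.IsHermitian)
    {I : Set ℝ} {f : ℝ → ℝ} (hf : ConvexOn ℝ I f) (hspec : ∀ j, hB.eigenvalues j ∈ I)
    {x : EuclideanSpace ℂ (Fin n)} (hx : ‖x‖ = 1) :
    q B x ∈ I ∧ f (q B x) ≤ q (cfc f B) x := by
  set b := hB.eigenvectorBasis
  have hw0 : ∀ j ∈ Finset.univ, (0:ℝ) ≤ ‖(inner (𝕜 := ℂ) (b j) x : ℂ)‖ ^ 2 :=
    fun j _ => by positivity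
  have hw1 : ∑ j, ‖(inner (𝕜 := ℂ) (b j) x : ℂ)‖ ^ 2 = 1 := by
    rw [← norm_sq_eq_sum b x, hx]
    norm_num
  have hq : q B x = ∑ j, ‖(inner (𝕜 := ℂ) (b j) x : ℂ)‖ ^ 2 • hB.eigenvalues j := by
    rw [q_eq_sum hB b hB.eigenvalues (apply_eigvec hB)]
    simp [smul_eq_mul, mul_comm]
  constructor
  · rw [hq]
    exact hf.1.sum_mem hw0 hw1 (fun i _ => hspec i)
  · have h2 : q (cfc f B) x = ∑ j, ‖(inner (𝕜 := ℂ) (b j) x : ℂ)‖ ^ 2 • f (hB.eigenvalues j) := by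
      rw [q_eq_sum ((cfc_predicate f B : IsSelfAdjoint (cfc f B))) b (f ∘ hB.eigenvalues)
        (cfc_apply_eigvec hB f)]
      simp [smul_eq_mul, mul_comm]
    rw [hq, h2]
    exact hf.map_sum_le hw0 hw1 (fun i _ => hspec i)


lemma normalize_unit {x : EuclideanSpace ℂ (Fin n)} (hx0 : x ≠ 0) :
    ‖((‖x‖⁻¹ : ℝ) • x : EuclideanSpace ℂ (Fin n))‖ = 1 :=
  norm_smul_inv_norm hx0

lemma normalize_mem (M : Submodule ℂ (EuclideanSpace ℂ (Fin n))) {x : EuclideanSpace ℂ (Fin n)}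
    (hx : x ∈ M) : ((‖x‖⁻¹ : ℝ) • x) ∈ M := by
  rw [RCLike.real_smul_eq_coe_smul (K := ℂ)]
  exact M.smul_mem _ hx

end AujlaAux

open scoped ComplexOrder

/-- The eigenvalues of a (Hermitian) matrix arranged in non-increasing order, counted
with multiplicity; junk value `0` for non-Hermitian matrices. -/
noncomputable def eigDesc {n : ℕ} (A : Matrix (Fin n) (Fin n) ℂ) (i : Fin n) : ℝ :=
  if h : A.IsHermitian then (h.eigenvalues ∘ Tuple.sort h.eigenvalues) i.rev else 0

namespace AujlaAux

lemma eigDesc_eq {B : Matrix (Fin n) (Fin n) ℂ} (hB : B.IsHermitian) (i : Fin n) :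
    eigDesc B i = hB.eigenvalues (Tuple.sort hB.eigenvalues i.rev) := by
  rw [eigDesc, dif_pos hB]
  rfl

/-- one half of Courant–Fischer: a lower bound for the i-th descending eigenvalue from a
subspace of dimension `i+1` on which the quadratic form is at least `t`. -/
lemma le_eigDesc_of_span {B : Matrix (Fin n) (Fin n) ℂ} (hB : B.IsHermitian) (i : Fin n)
    (t : ℝ) (M : Submodule ℂ (EuclideanSpace ℂ (Fin n)))
    (hMrank : Module.finrank ℂ M = (i : ℕ) + 1)
    (hM : ∀ x ∈ M, ‖x‖ = 1 → t ≤ q B x) : t ≤ eigDesc B i := by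
  classical
  set σ := Tuple.sort hB.eigenvalues with hσ
  set S' : Finset (Fin n) := (Finset.Iic i.rev).image σ with hS'
  have hcard : S'.card = n - (i : ℕ) := by
    rw [hS', Finset.card_image_of_injective _ (Equiv.injective σ), Fin.card_Iic]
    have h1 := i.isLt
    have h2 := Fin.val_rev i
    omega
  set N : Submodule ℂ (EuclideanSpace ℂ (Fin n)) :=
    Submodule.span ℂ (⇑hB.eigenvectorBasis '' (S' : Set (Fin n))) with hN
  have hNrank : Module.finrank ℂ N = n - (i : ℕ) := by
    rw [hN, finrank_span_image, hcard]
  obtain ⟨x, hx0, hxM, hxN⟩ := exists_ne_zero_mem_inf M N (by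
    rw [hMrank, hNrank]
    have := i.isLt
    omega)
  set u : EuclideanSpace ℂ (Fin n) := (‖x‖⁻¹ : ℝ) • x with hu
  have hu1 : ‖u‖ = 1 := normalize_unit hx0
  have huM : u ∈ M := normalize_mem M hxM
  have huN : u ∈ N := normalize_mem N hxN
  have hle1 : t ≤ q B u := hM u huM hu1
  have hle2 : q B u ≤ eigDesc B i * ‖u‖ ^ 2 := by
    refine q_le_of_mem_span hB hB.eigenvectorBasis hB.eigenvalues (apply_eigvec hB) S'
      (eigDesc B i) ?_ huN
    intro j hj
    obtain ⟨k, hk, rfl⟩ := Finset.mem_image.1 hj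
    rw [eigDesc_eq hB i]
    exact Tuple.monotone_sort hB.eigenvalues (Finset.mem_Iic.1 hk)
  rw [hu1] at hle2
  calc t ≤ q B u := hle1
    _ ≤ eigDesc B i * 1 ^ 2 := hle2
    _ = eigDesc B i := by ring

/-- the other half: an upper bound for the i-th descending eigenvalue from a subspace of
dimension `n - i` on which the quadratic form is at most `s`. -/
lemma eigDesc_le_of_span {B : Matrix (Fin n) (Fin n) ℂ} (hB : B.IsHermitian) (i : Fin n)
    (s : ℝ) (M : Submodule ℂ (EuclideanSpace ℂ (Fin n)))
    (hMrank : Module.finrank ℂ M = n - (i : ℕ))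
    (hM : ∀ x ∈ M, ‖x‖ = 1 → q B x ≤ s) : eigDesc B i ≤ s := by
  classical
  set σ := Tuple.sort hB.eigenvalues with hσ
  set S' : Finset (Fin n) := (Finset.Ici i.rev).image σ with hS'
  have hcard : S'.card = (i : ℕ) + 1 := by
    rw [hS', Finset.card_image_of_injective _ (Equiv.injective σ), Fin.card_Ici]
    have h1 := i.isLt
    have h2 := Fin.val_rev i
    omega
  set N : Submodule ℂ (EuclideanSpace ℂ (Fin n)) :=
    Submodule.span ℂ (⇑hB.eigenvectorBasis '' (S' : Set (Fin n))) with hN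
  have hNrank : Module.finrank ℂ N = (i : ℕ) + 1 := by
    rw [hN, finrank_span_image, hcard]
  obtain ⟨x, hx0, hxM, hxN⟩ := exists_ne_zero_mem_inf M N (by
    rw [hMrank, hNrank]
    have := i.isLt
    omega)
  set u : EuclideanSpace ℂ (Fin n) := (‖x‖⁻¹ : ℝ) • x with hu
  have hu1 : ‖u‖ = 1 := normalize_unit hx0
  have huM : u ∈ M := normalize_mem M hxM
  have huN : u ∈ N := normalize_mem N hxN
  have hle1 : q B u ≤ s := hM u huM hu1
  have hle2 : eigDesc B i * ‖u‖ ^ 2 ≤ q B u := by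
    refine le_q_of_mem_span hB hB.eigenvectorBasis hB.eigenvalues (apply_eigvec hB) S'
      (eigDesc B i) ?_ huN
    intro j hj
    obtain ⟨k, hk, rfl⟩ := Finset.mem_image.1 hj
    rw [eigDesc_eq hB i]
    exact Tuple.monotone_sort hB.eigenvalues (Finset.mem_Ici.1 hk)
  rw [hu1] at hle2
  calc eigDesc B i = eigDesc B i * 1 ^ 2 := by ring
    _ ≤ q B u := hle2
    _ ≤ s := hle1

end AujlaAux

/-- Aujla–Silva type inequality: for Hermitian matrices `A, D` with spectra in an open
interval `I`, a monotone convex `f : ℝ → ℝ` and `α ∈ (0,1)`,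
`λ_i(f(αA + (1-α)D)) ≤ λ_i(α f(A) + (1-α) f(D))` for every `i`. -/
theorem eigDesc_cfc_convexCombination_le {n : ℕ} (A D : Matrix (Fin n) (Fin n) ℂ)
    (hA : A.IsHermitian) (hD : D.IsHermitian)
    (I : Set ℝ) (hI_open : IsOpen I) (hI_conn : I.OrdConnected)
    (hAspec : spectrum ℝ A ⊆ I) (hDspec : spectrum ℝ D ⊆ I)
    (f : ℝ → ℝ) (hf : ConvexOn ℝ I f) (hf_mono : MonotoneOn f I ∨ AntitoneOn f I)
    (α : ℝ) (hα0 : 0 < α) (hα1 : α < 1) :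
    ∀ i : Fin n,
      eigDesc (cfc f (α • A + (1 - α) • D)) i ≤
        eigDesc (α • cfc f A + (1 - α) • cfc f D) i := by
  intro i
  classical
  open AujlaAux in
  set C := α • A + (1 - α) • D with hCdef
  set R := α • cfc f A + (1 - α) • cfc f D with hRdef
  have hα1' : (0:ℝ) ≤ 1 - α := by linarith
  have hαsum : α + (1 - α) = 1 := by ring
  have hC : C.IsHermitian := by
    simp [hCdef, Matrix.IsHermitian, Matrix.conjTranspose_add, Matrix.conjTranspose_smul,
      hA.eq, hD.eq]
  have hfA : (cfc f A).IsHermitian := cfc_predicate f A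
  have hfD : (cfc f D).IsHermitian := cfc_predicate f D
  have hfC : (cfc f C).IsHermitian := cfc_predicate f C
  have hR : R.IsHermitian := by
    simp [hRdef, Matrix.IsHermitian, Matrix.conjTranspose_add, Matrix.conjTranspose_smul,
      hfA.eq, hfD.eq]
  have hAI : ∀ j, hA.eigenvalues j ∈ I := fun j => hAspec (hA.eigenvalues_mem_spectrum_real j)
  have hDI : ∀ j, hD.eigenvalues j ∈ I := fun j => hDspec (hD.eigenvalues_mem_spectrum_real j)
  have hqC : ∀ x, AujlaAux.q C x = α * AujlaAux.q A x + (1 - α) * AujlaAux.q D x := by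
    intro x
    rw [hCdef, AujlaAux.q_add, AujlaAux.q_real_smul, AujlaAux.q_real_smul]
  have hqR : ∀ x, AujlaAux.q R x
      = α * AujlaAux.q (cfc f A) x + (1 - α) * AujlaAux.q (cfc f D) x := by
    intro x
    rw [hRdef, AujlaAux.q_add, AujlaAux.q_real_smul, AujlaAux.q_real_smul]
  have hmemC : ∀ x : EuclideanSpace ℂ (Fin n), ‖x‖ = 1 → AujlaAux.q C x ∈ I := by
    intro x hx
    rw [hqC]
    have h1 := (AujlaAux.q_mem_and_jensen hA hf hAI hx).1
    have h2 := (AujlaAux.q_mem_and_jensen hD hf hDI hx).1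
    simpa [smul_eq_mul] using hf.1 h1 h2 (le_of_lt hα0) hα1' hαsum
  have hCI : ∀ j, hC.eigenvalues j ∈ I := by
    intro j
    have h1 : ‖hC.eigenvectorBasis j‖ = 1 := hC.eigenvectorBasis.orthonormal.1 j
    have := hmemC _ h1
    rwa [AujlaAux.q_eigvec hC j] at this
  have hchain : ∀ x : EuclideanSpace ℂ (Fin n), ‖x‖ = 1 →
      f (AujlaAux.q C x) ≤ AujlaAux.q R x := by
    intro x hx
    have hjA := AujlaAux.q_mem_and_jensen hA hf hAI hx
    have hjD := AujlaAux.q_mem_and_jensen hD hf hDI hx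
    have hconv := hf.2 hjA.1 hjD.1 (le_of_lt hα0) hα1' hαsum
    simp only [smul_eq_mul] at hconv
    rw [hqC x, hqR x]
    calc f (α * AujlaAux.q A x + (1 - α) * AujlaAux.q D x)
        ≤ α * f (AujlaAux.q A x) + (1 - α) * f (AujlaAux.q D x) := hconv
      _ ≤ α * AujlaAux.q (cfc f A) x + (1 - α) * AujlaAux.q (cfc f D) x := by
          have t1 := mul_le_mul_of_nonneg_left hjA.2 (le_of_lt hα0)
          have t2 := mul_le_mul_of_nonneg_left hjD.2 hα1'
          linarith
  -- sorted structure for C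
  set σC := Tuple.sort hC.eigenvalues with hσC
  have hmonoC : Monotone (hC.eigenvalues ∘ σC) := Tuple.monotone_sort hC.eigenvalues
  obtain ⟨lam, hlamI, S, hScard, hSmono, h1⟩ :
      ∃ lam, lam ∈ I ∧ ∃ S : Finset (Fin n), S.card = (i : ℕ) + 1 ∧
        (∀ x ∈ Submodule.span ℂ (⇑hC.eigenvectorBasis '' (S : Set (Fin n))),
          ‖x‖ = 1 → f lam ≤ f (AujlaAux.q C x)) ∧
        eigDesc (cfc f C) i ≤ f lam := by
    have hvalrev := Fin.val_rev i
    have hiLt := i.isLt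
    cases hf_mono with
    | inl hmono =>
      refine ⟨hC.eigenvalues (σC i.rev), hCI _, (Finset.Ici i.rev).image σC, ?_, ?_, ?_⟩
      · rw [Finset.card_image_of_injective _ (Equiv.injective σC), Fin.card_Ici]
        omega
      · intro x hx hx1
        have hle : hC.eigenvalues (σC i.rev) * ‖x‖ ^ 2 ≤ AujlaAux.q C x := by
          refine AujlaAux.le_q_of_mem_span hC hC.eigenvectorBasis hC.eigenvalues
            (AujlaAux.apply_eigvec hC) _ _ ?_ hx
          intro j hj
          obtain ⟨k, hk, rfl⟩ := Finset.mem_image.1 hj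
          exact hmonoC (Finset.mem_Ici.1 hk)
        rw [hx1] at hle
        refine hmono (hCI _) (hmemC x hx1) ?_
        nlinarith
      · -- eigDesc (cfc f C) i ≤ f lam via bottom span of C
        refine AujlaAux.eigDesc_le_of_span hfC i _
          (Submodule.span ℂ (⇑hC.eigenvectorBasis '' (((Finset.Iic i.rev).image σC : Finset (Fin n)) : Set (Fin n)))) ?_ ?_
        · rw [AujlaAux.finrank_span_image,
            Finset.card_image_of_injective _ (Equiv.injective σC), Fin.card_Iic]
          omega
        · intro x hx hx1
          have hle : AujlaAux.q (cfc f C) x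
              ≤ f (hC.eigenvalues (σC i.rev)) * ‖x‖ ^ 2 := by
            refine AujlaAux.q_le_of_mem_span hfC hC.eigenvectorBasis (f ∘ hC.eigenvalues)
              (AujlaAux.cfc_apply_eigvec hC f) _ _ ?_ hx
            intro j hj
            obtain ⟨k, hk, rfl⟩ := Finset.mem_image.1 hj
            exact hmono (hCI _) (hCI _) (hmonoC (Finset.mem_Iic.1 hk))
          rw [hx1] at hle
          nlinarith
    | inr hanti =>
      refine ⟨hC.eigenvalues (σC i), hCI _, (Finset.Iic i).image σC, ?_, ?_, ?_⟩
      · rw [Finset.card_image_of_injective _ (Equiv.injective σC), Fin.card_Iic]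
      · intro x hx hx1
        have hle : AujlaAux.q C x ≤ hC.eigenvalues (σC i) * ‖x‖ ^ 2 := by
          refine AujlaAux.q_le_of_mem_span hC hC.eigenvectorBasis hC.eigenvalues
            (AujlaAux.apply_eigvec hC) _ _ ?_ hx
          intro j hj
          obtain ⟨k, hk, rfl⟩ := Finset.mem_image.1 hj
          exact hmonoC (Finset.mem_Iic.1 hk)
        rw [hx1] at hle
        refine hanti (hmemC x hx1) (hCI _) ?_
        nlinarith
      · refine AujlaAux.eigDesc_le_of_span hfC i _
          (Submodule.span ℂ (⇑hC.eigenvectorBasis '' (((Finset.Ici i).image σC : Finset (Fin n)) : Set (Fin n)))) ?_ ?_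
        · rw [AujlaAux.finrank_span_image,
            Finset.card_image_of_injective _ (Equiv.injective σC), Fin.card_Ici]
        · intro x hx hx1
          have hle : AujlaAux.q (cfc f C) x ≤ f (hC.eigenvalues (σC i)) * ‖x‖ ^ 2 := by
            refine AujlaAux.q_le_of_mem_span hfC hC.eigenvectorBasis (f ∘ hC.eigenvalues)
              (AujlaAux.cfc_apply_eigvec hC f) _ _ ?_ hx
            intro j hj
            obtain ⟨k, hk, rfl⟩ := Finset.mem_image.1 hj
            exact hanti (hCI _) (hCI _) (hmonoC (Finset.mem_Ici.1 hk))
          rw [hx1] at hle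
          nlinarith
  -- conclude
  have h2 : f lam ≤ eigDesc R i := by
    refine AujlaAux.le_eigDesc_of_span hR i _
      (Submodule.span ℂ (⇑hC.eigenvectorBasis '' (S : Set (Fin n)))) ?_ ?_
    · rw [AujlaAux.finrank_span_image, hScard]
    · intro x hx hx1
      exact le_trans (hSmono x hx hx1) (hchain x hx1)
  exact le_trans h1 h2
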